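/- If L is a transfer operator for (A, α), then the range L(A) of L is a two-sided ideal of A. -/

import Mathlib

open scoped ComplexStarModule

lemma positive_map_star_comm
    {A : Type*} [NormedRing A] [StarRing A] [CStarRing A] [NormedAlgebra ℂ A]
    [CompleteSpace A] [StarModule ℂ A] [PartialOrder A] [StarOrderedRing A]
    (L : A →L[ℂ] A) (hpos : ∀ a : A, 0 ≤ a → 0 ≤ L a) (x : A) :
    L (star x) = star (L x) := by
  letI : CStarAlgebra A :=
    { ‹NormedRing A›, ‹StarRing A›, ‹CStarRing A›, ‹NormedAlgebra ℂ A›, ‹CompleteSpace A›,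
      ‹StarModule ℂ A› with }
  have hsa : ∀ a : A, 0 ≤ a → star (L a) = L a := fun a ha =>
    (IsSelfAdjoint.of_nonneg (hpos a ha))
  have key := CStarAlgebra.linear_combination_nonneg x
  have hp := CFC.posPart_nonneg (ℜ x : A)
  have hq := CFC.negPart_nonneg (ℜ x : A)
  have hr := CFC.posPart_nonneg (ℑ x : A)
  have hs := CFC.negPart_nonneg (ℑ x : A)
  rw [← key]
  simp only [star_add, star_sub, star_smul, map_add, map_sub, map_smul,
    (IsSelfAdjoint.of_nonneg hp).star_eq, (IsSelfAdjoint.of_nonneg hq).star_eq,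
    (IsSelfAdjoint.of_nonneg hr).star_eq, (IsSelfAdjoint.of_nonneg hs).star_eq,
    hsa _ hp, hsa _ hq, hsa _ hr, hsa _ hs]

theorem transfer_operator_range_two_sided_ideal
    {A : Type*} [NormedRing A] [StarRing A] [CStarRing A] [NormedAlgebra ℂ A]
    [CompleteSpace A] [StarModule ℂ A] [PartialOrder A] [StarOrderedRing A]
    (α : A →⋆ₐ[ℂ] A) (L : A →L[ℂ] A)
    (hpos : ∀ a : A, 0 ≤ a → 0 ≤ L a)
    (htr : ∀ a b : A, L (α a * b) = a * L b) :
    ∃ I : TwoSidedIdeal A, (I : Set A) = Set.range L := by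
  have hstar := positive_map_star_comm L hpos
  refine ⟨TwoSidedIdeal.mk' (Set.range L) ⟨0, map_zero L⟩
    (fun {x y} ⟨a, ha⟩ ⟨b, hb⟩ => ⟨a + b, by rw [map_add, ha, hb]⟩)
    (fun {x} ⟨a, ha⟩ => ⟨-a, by rw [map_neg, ha]⟩)
    (fun {x y} ⟨b, hb⟩ => ⟨α x * b, by rw [htr, hb]⟩)
    (fun {x y} ⟨b, hb⟩ => ⟨star (α (star y) * star b), ?_⟩), ?_⟩
  · rw [hstar, htr, star_mul, hstar, star_star, star_star, hb]
  · ext x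
    exact TwoSidedIdeal.mem_mk' _ _ _ _ _ _ x
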